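/- arXiv:1810.04254 — 2 statements merged into one kernel-verified Lean document; each statement's English description precedes it below -/
import Mathlib

section
/- (Theorem 1, MACH unbiased estimator) Let K, B, R be positive integers with B ≥ 2, let p : Fin K → ℝ be nonnegative with ∑_{k} p k = 1, and let h₁, …, h_R be random functions from Fin K to Fin B on a probability space Ω, each 2-universal, i.e., for each j, for all i ≠ k and all z₁, z₂ ∈ Fin B, Pr(h_j(i) = z₁ and h_j(k) = z₂) = 1/B². Define P^j_b = ∑_{k : h_j(k) = b} p k. Then for every class i, E[ (B/(B−1)) · ( (1/R) ∑_{j=1}^R P^j_{h_j(i)} − 1/B ) ] = p i. -/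
open MeasureTheory

theorem mach_unbiased_estimator
    {K B R : ℕ} (hK : 0 < K) (hB : 2 ≤ B) (hR : 0 < R)
    (p : Fin K → ℝ) (hp0 : ∀ k, 0 ≤ p k) (hp1 : ∑ k, p k = 1)
    {Ω : Type*} [MeasurableSpace Ω] (μ : Measure Ω) [IsProbabilityMeasure μ]
    (h : Fin R → Ω → Fin K → Fin B)
    (hmeas : ∀ (j : Fin R) (k : Fin K), Measurable fun ω => h j ω k)
    (huniv : ∀ (j : Fin R), ∀ i k : Fin K, i ≠ k → ∀ z₁ z₂ : Fin B,
      μ {ω | h j ω i = z₁ ∧ h j ω k = z₂} = 1 / (B : ENNReal) ^ 2)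
    (i : Fin K) :
    ∫ ω, ((B : ℝ) / ((B : ℝ) - 1)) *
        ((1 / (R : ℝ)) *
          (∑ j : Fin R, ∑ k ∈ Finset.univ.filter fun k => h j ω k = h j ω i, p k)
          - 1 / (B : ℝ)) ∂μ
      = p i := by
  classical
  have hB2 : (2:ℝ) ≤ B := by exact_mod_cast hB
  have hB0 : (B : ℝ) ≠ 0 := by linarith
  have hBn0 : (B : ℕ) ≠ 0 := by omega
  have hB1 : (B : ℝ) - 1 ≠ 0 := by linarith
  have hR0 : (R : ℝ) ≠ 0 := Nat.cast_ne_zero.mpr hR.ne'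
  set S : Fin R → Fin K → Set Ω := fun j k => {ω | h j ω k = h j ω i} with hSdef
  have hSeq : ∀ j k, S j k = ⋃ z : Fin B,
      ((fun ω => h j ω i) ⁻¹' {z}) ∩ ((fun ω => h j ω k) ⁻¹' {z}) := by
    intro j k
    ext ω
    simp only [hSdef, Set.mem_setOf_eq, Set.mem_iUnion, Set.mem_inter_iff,
      Set.mem_preimage, Set.mem_singleton_iff]
    constructor
    · intro hh; exact ⟨h j ω i, rfl, hh⟩
    · rintro ⟨z, h1, h2⟩; rw [h2, h1]
  have hSm : ∀ j k, MeasurableSet (S j k) := by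
    intro j k
    rw [hSeq]
    exact MeasurableSet.iUnion fun z =>
      ((hmeas j i) (measurableSet_singleton z)).inter
        ((hmeas j k) (measurableSet_singleton z))
  have hmui : ∀ j, μ (S j i) = 1 := by
    intro j
    have : S j i = Set.univ := by ext ω; simp [hSdef]
    rw [this]; exact measure_univ
  have hmu : ∀ j k, k ≠ i → μ (S j k) = 1 / (B : ENNReal) := by
    intro j k hk
    rw [hSeq]
    rw [measure_iUnion]
    · have hterm : ∀ z : Fin B,
        μ (((fun ω => h j ω i) ⁻¹' {z}) ∩ ((fun ω => h j ω k) ⁻¹' {z}))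
          = 1 / (B : ENNReal) ^ 2 := by
        intro z
        have hset : ((fun ω => h j ω i) ⁻¹' {z}) ∩ ((fun ω => h j ω k) ⁻¹' {z})
            = {ω | h j ω i = z ∧ h j ω k = z} := by
          ext ω
          simp [Set.mem_inter_iff]
        rw [hset]
        exact huniv j i k (Ne.symm hk) z z
      rw [tsum_fintype]
      simp only [hterm, Finset.sum_const, Finset.card_univ, Fintype.card_fin, nsmul_eq_mul]
      have hBE : (B : ENNReal) ≠ 0 := by exact_mod_cast Nat.cast_ne_zero.mpr hBn0
      have hBT : (B : ENNReal) ≠ ⊤ := ENNReal.natCast_ne_top B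
      rw [div_eq_mul_inv, div_eq_mul_inv, one_mul, one_mul, pow_two, ENNReal.mul_inv (Or.inl hBE) (Or.inl hBT)]
      rw [← mul_assoc, ENNReal.mul_inv_cancel hBE hBT, one_mul]
    · intro z₁ z₂ hz
      simp only [Function.onFun, Set.disjoint_left]
      rintro ω ⟨h1, h2⟩ ⟨h3, h4⟩
      exact hz (by simp only [Set.mem_preimage, Set.mem_singleton_iff] at h1 h3; rw [← h1, ← h3])
    · exact fun z => ((hmeas j i) (measurableSet_singleton z)).inter
        ((hmeas j k) (measurableSet_singleton z))
  have hterm_eq : ∀ j k (ω : Ω),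
      (if h j ω k = h j ω i then p k else 0) = (S j k).indicator (fun _ => p k) ω := by
    intro j k ω
    simp [Set.indicator_apply, hSdef]
  have hint_term : ∀ j k, Integrable (fun ω => if h j ω k = h j ω i then p k else 0) μ := by
    intro j k
    have : Integrable ((S j k).indicator (fun _ => p k)) μ :=
      (integrable_const (p k)).indicator (hSm j k)
    exact this.congr (Filter.Eventually.of_forall fun ω => (hterm_eq j k ω).symm)
  have hval_term : ∀ j k,
      ∫ ω, (if h j ω k = h j ω i then p k else 0) ∂μ = (μ (S j k)).toReal * p k := by
    intro j k
    rw [integral_congr_ae (Filter.Eventually.of_forall fun ω => hterm_eq j k ω)]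
    rw [integral_indicator_const _ (hSm j k)]
    simp [smul_eq_mul, Measure.real]
  have hFrw : ∀ (ω : Ω) (j : Fin R),
      (∑ k ∈ Finset.univ.filter fun k => h j ω k = h j ω i, p k)
        = ∑ k : Fin K, (if h j ω k = h j ω i then p k else 0) := by
    intro ω j
    rw [Finset.sum_filter]
  have hF_int : Integrable (fun ω => ∑ j : Fin R,
      ∑ k ∈ Finset.univ.filter fun k => h j ω k = h j ω i, p k) μ := by
    have : Integrable (fun ω => ∑ j : Fin R, ∑ k : Fin K,
        (if h j ω k = h j ω i then p k else 0)) μ :=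
      integrable_finset_sum _ fun j _ => integrable_finset_sum _ fun k _ => hint_term j k
    exact this.congr (Filter.Eventually.of_forall fun ω => by simp [hFrw])
  have hF_val : ∫ ω, (∑ j : Fin R,
      ∑ k ∈ Finset.univ.filter fun k => h j ω k = h j ω i, p k) ∂μ
        = (R : ℝ) * (p i + (1 - p i) / B) := by
    rw [integral_congr_ae (Filter.Eventually.of_forall fun ω => by
      simp only [hFrw] : _ =ᵐ[μ] fun ω => ∑ j : Fin R, ∑ k : Fin K,
        (if h j ω k = h j ω i then p k else 0))]
    rw [integral_finset_sum _ fun j _ => integrable_finset_sum _ fun k _ => hint_term j k]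
    have hj : ∀ j : Fin R, (∫ ω, (∑ k : Fin K, if h j ω k = h j ω i then p k else 0) ∂μ)
        = p i + (1 - p i) / B := by
      intro j
      rw [integral_finset_sum _ fun k _ => hint_term j k]
      have hv : ∀ k : Fin K, ∫ ω, (if h j ω k = h j ω i then p k else 0) ∂μ
          = (if k = i then p i - p i / B else 0) + p k / B := by
        intro k
        rw [hval_term]
        by_cases hk : k = i
        · subst hk; rw [hmui]; simp
        · rw [hmu j k hk, ENNReal.toReal_div]
          simp only [hk, if_false, ENNReal.toReal_one, ENNReal.toReal_natCast, zero_add]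
          ring
      simp only [hv]
      rw [Finset.sum_add_distrib, Finset.sum_ite_eq' Finset.univ i
        (fun _ => p i - p i / B), ← Finset.sum_div, hp1]
      simp only [Finset.mem_univ, if_true]
      ring
    simp only [hj, Finset.sum_const, Finset.card_univ, Fintype.card_fin, nsmul_eq_mul]
  rw [integral_const_mul]
  have hmain : ∫ ω, ((1 / (R : ℝ)) *
      (∑ j : Fin R, ∑ k ∈ Finset.univ.filter fun k => h j ω k = h j ω i, p k)
      - 1 / (B : ℝ)) ∂μ
      = (1 / (R:ℝ)) * ((R : ℝ) * (p i + (1 - p i) / B)) - 1 / B := by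
    rw [integral_sub (hF_int.const_mul _) (integrable_const _)]
    rw [integral_const_mul, hF_val]
    simp [measure_univ]
  rw [hmain]
  field_simp
  ring
end

section
/- (Theorem 2, distinguishability guarantee) Let K be a positive integer, B an integer with B ≥ 2, δ a real with 0 < δ ≤ 1, and let R be a positive integer with R ≥ 2·log(K/√δ)/log(B) (natural logarithm). Let h₁, …, h_R be mutually independent random functions from Fin K to Fin B, each 2-universal (for all i ≠ k and all z₁, z₂ ∈ Fin B, Pr(h_j(i) = z₁ and h_j(k) = z₂) = 1/B²). Then with probability at least 1 − δ, every pair of distinct classes c₁ ≠ c₂ in Fin K is distinguishable, i.e., there exists some j ∈ {1, …, R} with h_j(c₁) ≠ h_j(c₂). -/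
open MeasureTheory ProbabilityTheory

theorem mach_all_pairs_distinguishable
    {K B R : ℕ} (hK : 0 < K) (hB : 2 ≤ B) (hR : 0 < R)
    (δ : ℝ) (hδ0 : 0 < δ) (hδ1 : δ ≤ 1)
    (hRbound : 2 * Real.log ((K : ℝ) / Real.sqrt δ) / Real.log (B : ℝ) ≤ (R : ℝ))
    {Ω : Type*} [MeasurableSpace Ω] (μ : Measure Ω) [IsProbabilityMeasure μ]
    (h : Fin R → Ω → Fin K → Fin B)
    (hmeas : ∀ (j : Fin R) (k : Fin K), Measurable fun ω => h j ω k)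
    (hindep : iIndepFun h μ)
    (huniv : ∀ (j : Fin R), ∀ i k : Fin K, i ≠ k → ∀ z₁ z₂ : Fin B,
      μ {ω | h j ω i = z₁ ∧ h j ω k = z₂} = 1 / (B : ENNReal) ^ 2) :
    ENNReal.ofReal (1 - δ)
      ≤ μ {ω | ∀ c₁ c₂ : Fin K, c₁ ≠ c₂ → ∃ j : Fin R, h j ω c₁ ≠ h j ω c₂} := by
  have hB0 : (B : ENNReal) ≠ 0 := by
    simp only [ne_eq, Nat.cast_eq_zero]; omega
  have hBtop : (B : ENNReal) ≠ ⊤ := ENNReal.natCast_ne_top B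
  -- collision sets
  set C : Fin K → Fin K → Fin R → Set Ω := fun c₁ c₂ j => {ω | h j ω c₁ = h j ω c₂}
    with hCdef
  have hmeasC : ∀ c₁ c₂ j, MeasurableSet (C c₁ c₂ j) := fun c₁ c₂ j =>
    measurableSet_eq_fun (hmeas j c₁) (hmeas j c₂)
  -- per-j collision probability
  have hcollide : ∀ (j : Fin R) (c₁ c₂ : Fin K), c₁ ≠ c₂ →
      μ (C c₁ c₂ j) = (B : ENNReal)⁻¹ := by
    intro j c₁ c₂ hne
    have hU : C c₁ c₂ j = ⋃ z : Fin B, {ω | h j ω c₁ = z ∧ h j ω c₂ = z} := by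
      ext ω
      simp only [hCdef, Set.mem_setOf_eq, Set.mem_iUnion]
      constructor
      · intro h'; exact ⟨h j ω c₂, h', rfl⟩
      · rintro ⟨z, h1, h2⟩; rw [h1, h2]
    have hdisj : Pairwise (Function.onFun Disjoint
        fun z : Fin B => {ω | h j ω c₁ = z ∧ h j ω c₂ = z}) := by
      intro z₁ z₂ hzz
      refine Set.disjoint_left.2 ?_
      rintro ω ⟨h1, _⟩ ⟨h2, _⟩
      exact hzz (h1 ▸ h2 ▸ rfl)
    have hm : ∀ z : Fin B, MeasurableSet {ω | h j ω c₁ = z ∧ h j ω c₂ = z} := by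
      intro z
      exact ((hmeas j c₁) (measurableSet_singleton z)).inter
        ((hmeas j c₂) (measurableSet_singleton z))
    rw [hU, measure_iUnion hdisj hm, tsum_fintype]
    simp only [huniv j c₁ c₂ hne]
    rw [Finset.sum_const, Finset.card_univ, Fintype.card_fin, nsmul_eq_mul]
    rw [one_div, pow_two, ENNReal.mul_inv (Or.inl hB0) (Or.inl hBtop),
      ← mul_assoc, ENNReal.mul_inv_cancel hB0 hBtop, one_mul]
  -- product over j by independence
  have hprod : ∀ (c₁ c₂ : Fin K), c₁ ≠ c₂ →
      μ (⋂ j, C c₁ c₂ j) = ((B : ENNReal)⁻¹) ^ R := by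
    intro c₁ c₂ hne
    have := hindep.meas_iInter (s := fun j => C c₁ c₂ j) ?_
    · rw [this]
      simp only [hcollide _ c₁ c₂ hne]
      rw [Finset.prod_const, Finset.card_univ, Fintype.card_fin]
    · intro j
      refine ⟨{g : Fin K → Fin B | g c₁ = g c₂}, ?_, rfl⟩
      exact measurableSet_eq_fun (measurable_pi_apply c₁) (measurable_pi_apply c₂)
  -- the bad set
  set Bad : Set Ω := ⋃ p ∈ (Finset.univ.offDiag : Finset (Fin K × Fin K)),
      ⋂ j, C p.1 p.2 j with hBadDef
  have hmeasBad : MeasurableSet Bad := by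
    refine Finset.measurableSet_biUnion _ fun p _ => ?_
    exact MeasurableSet.iInter fun j => hmeasC p.1 p.2 j
  -- key real inequality : K^2 * (B^R)⁻¹ ≤ δ
  have hlogB : 0 < Real.log B := by
    apply Real.log_pos
    exact_mod_cast by omega
  have hKR : (K : ℝ) ^ 2 ≤ δ * (B : ℝ) ^ R := by
    have h1 : 2 * Real.log ((K : ℝ) / Real.sqrt δ) ≤ (R : ℝ) * Real.log B := by
      rw [div_le_iff₀ hlogB] at hRbound; linarith
    have hsq : Real.sqrt δ ≠ 0 := by positivity
    have h2 : Real.log ((K : ℝ) / Real.sqrt δ) = Real.log K - Real.log δ / 2 := by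
      rw [Real.log_div (by exact_mod_cast hK.ne') hsq, Real.log_sqrt hδ0.le]
    have h3 : Real.log ((K : ℝ) ^ 2 / δ) ≤ Real.log ((B : ℝ) ^ R) := by
      rw [Real.log_div (by positivity) hδ0.ne', Real.log_pow, Real.log_pow]
      push_cast
      rw [h2] at h1; linarith
    have h4 : (K : ℝ) ^ 2 / δ ≤ (B : ℝ) ^ R :=
      (Real.log_le_log_iff (by positivity) (by positivity)).1 h3
    calc (K : ℝ) ^ 2 = (K : ℝ) ^ 2 / δ * δ := by field_simp
    _ ≤ (B : ℝ) ^ R * δ := by nlinarith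
    _ = δ * (B : ℝ) ^ R := mul_comm _ _
  -- bound measure of Bad
  have hBRne : ((B : ENNReal) ^ R) ≠ 0 := pow_ne_zero _ hB0
  have hBRtop : ((B : ENNReal) ^ R) ≠ ⊤ := ENNReal.pow_ne_top hBtop
  have hBad : μ Bad ≤ ENNReal.ofReal δ := by
    calc μ Bad ≤ ∑ p ∈ (Finset.univ.offDiag : Finset (Fin K × Fin K)),
        μ (⋂ j, C p.1 p.2 j) := measure_biUnion_finset_le _ _
    _ = ∑ p ∈ (Finset.univ.offDiag : Finset (Fin K × Fin K)), ((B : ENNReal)⁻¹) ^ R := by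
        refine Finset.sum_congr rfl fun p hp => ?_
        exact hprod p.1 p.2 (Finset.mem_offDiag.1 hp).2.2
    _ = (Finset.univ.offDiag : Finset (Fin K × Fin K)).card * ((B : ENNReal)⁻¹) ^ R := by
        rw [Finset.sum_const, nsmul_eq_mul]
    _ ≤ (K : ENNReal) ^ 2 * ((B : ENNReal)⁻¹) ^ R := by
        gcongr
        have : (Finset.univ.offDiag : Finset (Fin K × Fin K)).card ≤ K * K := by
          calc _ ≤ (Finset.univ : Finset (Fin K × Fin K)).card :=
              Finset.card_le_card (Finset.subset_univ _)
          _ = K * K := by simp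
        calc ((Finset.univ.offDiag : Finset (Fin K × Fin K)).card : ENNReal)
            ≤ ((K * K : ℕ) : ENNReal) := by exact_mod_cast this
        _ = (K : ENNReal) ^ 2 := by push_cast; ring
    _ ≤ ENNReal.ofReal δ := by
        rw [← ENNReal.inv_pow, ← div_eq_mul_inv, ENNReal.div_le_iff hBRne hBRtop]
        have e1 : (K : ENNReal) ^ 2 = ENNReal.ofReal ((K : ℝ) ^ 2) := by
          rw [ENNReal.ofReal_pow (by positivity), ENNReal.ofReal_natCast]
        have e2 : ENNReal.ofReal δ * (B : ENNReal) ^ R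
            = ENNReal.ofReal (δ * (B : ℝ) ^ R) := by
          rw [ENNReal.ofReal_mul hδ0.le, ENNReal.ofReal_pow (by positivity),
            ENNReal.ofReal_natCast]
        rw [e1, e2]
        exact ENNReal.ofReal_le_ofReal hKR
  -- conclude
  have hGood : {ω | ∀ c₁ c₂ : Fin K, c₁ ≠ c₂ → ∃ j : Fin R, h j ω c₁ ≠ h j ω c₂}
      = Badᶜ := by
    ext ω
    constructor
    · intro H hmem
      simp only [hBadDef, Set.mem_iUnion, Set.mem_iInter, hCdef, Set.mem_setOf_eq,
        exists_prop] at hmem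
      obtain ⟨p, hp, hall⟩ := hmem
      obtain ⟨j, hj⟩ := H p.1 p.2 (Finset.mem_offDiag.1 hp).2.2
      exact hj (hall j)
    · intro H c₁ c₂ hne
      by_contra hcon
      push_neg at hcon
      apply H
      simp only [hBadDef, Set.mem_iUnion, Set.mem_iInter, hCdef, Set.mem_setOf_eq,
        exists_prop]
      exact ⟨(c₁, c₂), Finset.mem_offDiag.2 ⟨Finset.mem_univ _, Finset.mem_univ _, hne⟩, hcon⟩
  rw [hGood, prob_compl_eq_one_sub hmeasBad]
  have : ENNReal.ofReal (1 - δ) = 1 - ENNReal.ofReal δ := by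
    rw [ENNReal.ofReal_sub _ hδ0.le, ENNReal.ofReal_one]
  rw [this]
  exact tsub_le_tsub_left hBad 1
end
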